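/- Let 2 ≤ k ≤ d−1 and 1 ≤ p, r ≤ ∞. If there exists a constant C > 0 such that for all prime powers q with sufficiently large characteristic and all f : F_q^d → ℂ one has ‖f∗dσ_k‖_{L^r(dx)} ≤ C‖f‖_{L^p(dx)}, then the point (1/p, 1/r) lies in the convex hull in ℝ² of the four points (0,0), (0,1), (1,1), and (d/(2d−k), (d−k)/(2d−k)). -/

import Mathlib

open MvPolynomial

noncomputable section

/-- The homogeneous polynomial `h_{j+1}(x) = x_1^{j+2} + ⋯ + x_k^{j+2} − x_{k+j+1}^{j+2}`
(in 0-based indexing, `j : Fin (d-k)` corresponds to the defining equation `h_{j+1}`). -/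
def hpoly (K : Type) [CommRing K] (d k : ℕ) (j : Fin (d - k)) : MvPolynomial (Fin d) K :=
  (∑ i : Fin d, if (i : ℕ) < k then X i ^ ((j : ℕ) + 2) else 0)
    - X (⟨k + (j : ℕ), by have h := j.isLt; omega⟩ : Fin d) ^ ((j : ℕ) + 2)

/-- The homogeneous variety `H̄_k` as a set of points with coordinates in `K`. -/
def Hset (K : Type) [CommRing K] (d k : ℕ) : Set (Fin d → K) :=
  {x | ∀ j : Fin (d - k), eval x (hpoly K d k j) = 0}

open scoped Classical in
/-- The set of `F_q`-points of the homogeneous variety `H_k`, as a finite set. -/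
def Hfin (F : Type) [Field F] [Fintype F] (d k : ℕ) : Finset (Fin d → F) :=
  Finset.univ.filter fun x => ∀ j : Fin (d - k), eval x (hpoly F d k j) = 0

open scoped ENNReal in
/-- `L^p` norm with respect to the normalized counting measure on `F_q^d`. -/
def lpNorm {F : Type} [Fintype F] {d : ℕ} (p : ℝ≥0∞) (f : (Fin d → F) → ℂ) : ℝ :=
  if p = ⊤ then ⨆ x, ‖f x‖
  else (((Fintype.card F : ℝ) ^ d)⁻¹ * ∑ x, ‖f x‖ ^ p.toReal) ^ (1 / p.toReal)

/-- Convolution `f ∗ dσ` with the normalized surface measure on `V`. -/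
def convMeas {F : Type} [Field F] [Fintype F] {d : ℕ} (V : Finset (Fin d → F))
    (f : (Fin d → F) → ℂ) : (Fin d → F) → ℂ :=
  fun y => (V.card : ℂ)⁻¹ * ∑ x ∈ V, f (y - x)

end


section aux
open scoped ENNReal
set_option maxRecDepth 4000
noncomputable section

section lemmas
variable {F : Type} [Field F] [Fintype F] {d k : ℕ}

omit [Fintype F] in
lemma eval_hpoly (x : Fin d → F) (j : Fin (d - k)) :
    eval x (hpoly F d k j)
      = (∑ i : Fin d, if (i : ℕ) < k then x i ^ ((j : ℕ) + 2) else 0)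
        - x (⟨k + (j : ℕ), by have h := j.isLt; omega⟩ : Fin d) ^ ((j : ℕ) + 2) := by
  simp [hpoly, apply_ite (eval x)]

lemma mem_Hfin {x : Fin d → F} :
    x ∈ Hfin F d k ↔ ∀ j : Fin (d - k),
      (∑ i : Fin d, if (i : ℕ) < k then x i ^ ((j : ℕ) + 2) else 0)
        = x (⟨k + (j : ℕ), by have h := j.isLt; omega⟩ : Fin d) ^ ((j : ℕ) + 2) := by
  classical
  simp [Hfin, eval_hpoly, sub_eq_zero]

lemma zero_mem_Hfin : (0 : Fin d → F) ∈ Hfin F d k := by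
  simp [mem_Hfin]

lemma neg_mem_Hfin {x : Fin d → F} (hx : x ∈ Hfin F d k) : -x ∈ Hfin F d k := by
  rw [mem_Hfin] at hx ⊢
  intro j
  have h1 : (∑ i : Fin d, if (i : ℕ) < k then (-x) i ^ ((j : ℕ) + 2) else 0)
      = (-1 : F) ^ ((j : ℕ) + 2) * ∑ i : Fin d, if (i : ℕ) < k then x i ^ ((j : ℕ) + 2) else 0 := by
    rw [Finset.mul_sum]
    refine Finset.sum_congr rfl fun i _ => ?_
    split
    · rw [Pi.neg_apply, neg_pow]
    · simp
  rw [h1, hx j, Pi.neg_apply, neg_pow, neg_pow]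
  ring

end lemmas


section lemmas2
variable {F : Type} [Field F] [Fintype F] {d k : ℕ}

omit [Fintype F] in
lemma sum_ite_lt (hkd' : k ≤ d) (g : Fin d → F) :
    (∑ i : Fin d, if (i : ℕ) < k then g i else 0)
      = ∑ i : Fin k, g (Fin.castLE hkd' i) := by
  classical
  rw [← Finset.sum_filter]
  refine Finset.sum_bij (fun a ha => (⟨(a : ℕ), by simpa using ha⟩ : Fin k)) ?_ ?_ ?_ ?_
  · intro a ha; exact Finset.mem_univ _
  · intro a₁ ha₁ a₂ ha₂ hh
    simp only [Fin.mk.injEq] at hh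
    exact Fin.ext hh
  · intro b _
    refine ⟨Fin.castLE hkd' b, by simpa using b.isLt, rfl⟩
  · intro a ha
    congr 1

lemma Hfin_card_le (hd : 3 ≤ d) (hk2 : 2 ≤ k) (hkd : k ≤ d - 1) :
    (Hfin F d k).card ≤ d ^ d * Fintype.card F ^ k := by
  classical
  have hkd' : k ≤ d := by omega
  set proj : (Fin d → F) → (Fin k → F) := fun x i => x (Fin.castLE hkd' i) with hproj
  rw [Finset.card_eq_sum_card_fiberwise (f := proj) (t := Finset.univ)
    (fun x _ => Finset.mem_univ _)]
  have hfiber : ∀ y : Fin k → F,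
      ((Hfin F d k).filter fun x => proj x = y).card ≤ d ^ (d - k) := by
    intro y
    set root : Fin (d - k) → Finset F := fun j =>
      (Polynomial.nthRoots ((j : ℕ) + 2) (∑ i : Fin k, y i ^ ((j : ℕ) + 2))).toFinset with hroot
    have hcard : (Fintype.piFinset root).card ≤ d ^ (d - k) := by
      rw [Fintype.card_piFinset]
      calc ∏ j : Fin (d - k), (root j).card ≤ ∏ _j : Fin (d - k), d := by
            refine Finset.prod_le_prod' fun j _ => ?_
            refine le_trans (Multiset.toFinset_card_le _) ?_
            refine le_trans (Polynomial.card_nthRoots _ _) ?_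
            have := j.isLt; omega
        _ = d ^ (d - k) := by simp [Finset.prod_const]
    refine le_trans (Finset.card_le_card_of_injOn
      (fun x => fun j : Fin (d - k) => x (⟨k + (j : ℕ), by have := j.isLt; omega⟩ : Fin d))
      ?_ ?_) hcard
    · intro x hx
      rw [Finset.mem_coe, Finset.mem_filter] at hx
      obtain ⟨hxH, hxy⟩ := hx
      rw [Finset.mem_coe, Fintype.mem_piFinset]
      intro j
      rw [hroot, Multiset.mem_toFinset, Polynomial.mem_nthRoots (by omega)]
      rw [← (mem_Hfin.mp hxH) j, sum_ite_lt hkd']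
      refine Finset.sum_congr rfl fun i _ => ?_
      rw [← hxy]
    · intro x hx x' hx' hxx'
      rw [Finset.coe_filter, Set.mem_setOf_eq] at hx hx'
      funext i
      rcases lt_or_ge (i : ℕ) k with hik | hik
      · have h1 := congrFun hx.2 ⟨(i : ℕ), hik⟩
        have h2 := congrFun hx'.2 ⟨(i : ℕ), hik⟩
        rw [hproj] at h1 h2
        simp only at h1 h2
        have hcast : Fin.castLE hkd' (⟨(i : ℕ), hik⟩ : Fin k) = i := by
          apply Fin.ext; rfl
        rw [hcast] at h1 h2
        rw [h1, h2]
      · have hik2 : (i : ℕ) - k < d - k := by have := i.isLt; omega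
        have h1 := congrFun hxx' ⟨(i : ℕ) - k, hik2⟩
        simp only at h1
        have hcast : (⟨k + ((i : ℕ) - k), by have := i.isLt; omega⟩ : Fin d) = i := by
          apply Fin.ext; simp; omega
        rwa [hcast] at h1
  calc ∑ y : Fin k → F, ((Hfin F d k).filter fun x => proj x = y).card
      ≤ ∑ _y : Fin k → F, d ^ (d - k) := Finset.sum_le_sum fun y _ => hfiber y
    _ = Fintype.card F ^ k * d ^ (d - k) := by
        simp [Finset.sum_const, Finset.card_univ, Fintype.card_fun]
    _ ≤ d ^ d * Fintype.card F ^ k := by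
        rw [mul_comm]
        exact Nat.mul_le_mul_right _ (Nat.pow_le_pow_right (by omega) (Nat.sub_le d k))
end lemmas2


open scoped Classical in
def deltaFn (F : Type) [Fintype F] [Zero F] (d : ℕ) : (Fin d → F) → ℂ :=
  fun x => if x = 0 then 1 else 0

open scoped Classical in
def indFn {F : Type} [Field F] [Fintype F] {d : ℕ} (V : Finset (Fin d → F)) :
    (Fin d → F) → ℂ :=
  fun x => if x ∈ V then 1 else 0

section analytic
open scoped Classical
variable {F : Type} [Field F] [Fintype F] {d : ℕ} {p r : ℝ≥0∞}

lemma qR_pos : (0:ℝ) < (Fintype.card F : ℝ) := by exact_mod_cast Fintype.card_pos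

lemma toReal_pos_of (hp : 1 ≤ p) (hptop : p ≠ ⊤) : 0 < p.toReal :=
  ENNReal.toReal_pos (by intro h; rw [h] at hp; exact absurd hp (by simp)) hptop

/-- `L^p` norm of the delta function. -/
lemma lpNorm_delta (hp : 1 ≤ p) :
    lpNorm p (deltaFn F d)
      = (Fintype.card F : ℝ) ^ (-(d:ℝ) * (1/p).toReal) := by
  classical
  have hq := (qR_pos (F := F))
  by_cases hptop : p = ⊤
  · subst hptop
    rw [lpNorm, if_pos rfl, show (-(d:ℝ) * (1/(⊤:ℝ≥0∞)).toReal) = 0 by simp,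
      Real.rpow_zero]
    haveI : Nonempty (Fin d → F) := ⟨0⟩
    apply le_antisymm
    · apply ciSup_le
      intro x
      unfold deltaFn
      split <;> simp
    · have hb := le_ciSup (f := fun x => ‖deltaFn F d x‖)
        (Set.Finite.bddAbove (Set.finite_range _)) 0
      simpa [deltaFn] using hb
  · rw [lpNorm, if_neg hptop]
    have hpt := toReal_pos_of hp hptop
    have hsum : (∑ x : Fin d → F, ‖deltaFn F d x‖ ^ p.toReal) = 1 := by
      have h1 : ∀ x : Fin d → F,
          ‖deltaFn F d x‖ ^ p.toReal = if x = 0 then (1:ℝ) else 0 := by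
        intro x; unfold deltaFn; split <;> simp [Real.zero_rpow hpt.ne']
      rw [Finset.sum_congr rfl fun x _ => h1 x]
      simp
    rw [hsum, mul_one, ← Real.rpow_natCast (Fintype.card F : ℝ) d,
      ← Real.rpow_neg hq.le, ← Real.rpow_mul hq.le]
    simp

variable {k : ℕ}

lemma convMeas_delta (y : Fin d → F) :
    convMeas (Hfin F d k) (deltaFn F d) y
      = ((Hfin F d k).card : ℂ)⁻¹ * (if y ∈ Hfin F d k then 1 else 0) := by
  classical
  unfold convMeas deltaFn
  congr 1
  have h1 : ∀ x : Fin d → F, ((if y - x = 0 then (1:ℂ) else 0)) = if x = y then 1 else 0 := by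
    intro x
    simp [sub_eq_zero, eq_comm]
  rw [Finset.sum_congr rfl fun x _ => h1 x, Finset.sum_ite_eq' (Hfin F d k) y (fun _ => (1:ℂ))]

lemma abs_convMeas_delta (y : Fin d → F) :
    ‖convMeas (Hfin F d k) (deltaFn F d) y‖
      = (((Hfin F d k).card : ℝ))⁻¹ * (if y ∈ Hfin F d k then 1 else 0) := by
  classical
  rw [convMeas_delta, norm_mul, norm_inv]
  congr 1
  · simp
  · split <;> simp

lemma lpNorm_conv_delta (hr : 1 ≤ r) (h0 : (0 : Fin d → F) ∈ Hfin F d k) :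
    ((Hfin F d k).card : ℝ) ^ ((1/r).toReal - 1)
        * (Fintype.card F : ℝ) ^ (-(d:ℝ) * (1/r).toReal)
      ≤ lpNorm r (convMeas (Hfin F d k) (deltaFn F d)) := by
  classical
  have hq := (qR_pos (F := F))
  have hH0 : 0 < (Hfin F d k).card := Finset.card_pos.mpr ⟨0, h0⟩
  have hN : (0:ℝ) < ((Hfin F d k).card : ℝ) := by exact_mod_cast hH0
  by_cases hrtop : r = ⊤
  · subst hrtop
    rw [lpNorm, if_pos rfl]
    haveI : Nonempty (Fin d → F) := ⟨0⟩
    have hb := le_ciSup (f := fun y => ‖convMeas (Hfin F d k) (deltaFn F d) y‖)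
      (Set.Finite.bddAbove (Set.finite_range _)) 0
    rw [abs_convMeas_delta 0, if_pos h0, mul_one] at hb
    refine le_trans (le_of_eq ?_) hb
    rw [show ((1:ℝ≥0∞)/⊤).toReal = 0 by simp]
    rw [zero_sub, mul_zero, Real.rpow_zero, mul_one, Real.rpow_neg_one]
  · rw [lpNorm, if_neg hrtop]
    have hrt := toReal_pos_of hr hrtop
    set rt := r.toReal with hrt'
    have hb : (1/r).toReal = 1/rt := by
      rw [hrt', ENNReal.toReal_div, ENNReal.toReal_one]
    have hsum : (∑ y : Fin d → F, ‖convMeas (Hfin F d k) (deltaFn F d) y‖ ^ rt)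
        = ((Hfin F d k).card : ℝ) * (((Hfin F d k).card : ℝ)⁻¹) ^ rt := by
      have h1 : ∀ y : Fin d → F,
          ‖convMeas (Hfin F d k) (deltaFn F d) y‖ ^ rt
            = if y ∈ Hfin F d k then (((Hfin F d k).card : ℝ)⁻¹) ^ rt else 0 := by
        intro y
        rw [abs_convMeas_delta]
        split <;> simp [Real.zero_rpow hrt.ne']
      rw [Finset.sum_congr rfl fun y _ => h1 y]
      rw [Finset.sum_ite_mem, Finset.univ_inter, Finset.sum_const, nsmul_eq_mul]
    refine le_of_eq ?_
    rw [hsum]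
    have e1 : ((Hfin F d k).card : ℝ) * (((Hfin F d k).card : ℝ)⁻¹) ^ rt
        = ((Hfin F d k).card : ℝ) ^ (1 - rt) := by
      rw [Real.inv_rpow hN.le, ← Real.rpow_neg hN.le,
        show (1 - rt) = 1 + -rt by ring, Real.rpow_add hN, Real.rpow_one]
    have e2 : ((Fintype.card F:ℝ) ^ d)⁻¹ = (Fintype.card F:ℝ) ^ (-(d:ℝ)) := by
      rw [← Real.rpow_natCast (Fintype.card F : ℝ) d, ← Real.rpow_neg hq.le]
    rw [e1, e2, Real.mul_rpow (by positivity) (by positivity),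
      ← Real.rpow_mul hq.le, ← Real.rpow_mul hN.le]
    have e3 : (1:ℝ)/rt - 1 = (1 - rt) * (1/rt) := by
      rw [sub_mul, one_mul, mul_one_div, div_self hrt.ne']
    rw [hb, e3, mul_comm]

lemma lpNorm_ind_le (hp : 1 ≤ p) :
    lpNorm p (indFn (Hfin F d k))
      ≤ ((Fintype.card F:ℝ) ^ (-(d:ℝ)) * ((Hfin F d k).card:ℝ)) ^ (1/p).toReal := by
  have hq := (qR_pos (F := F))
  by_cases hptop : p = ⊤
  · subst hptop
    rw [lpNorm, if_pos rfl, show ((1:ℝ≥0∞)/⊤).toReal = 0 by simp, Real.rpow_zero]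
    haveI : Nonempty (Fin d → F) := ⟨0⟩
    apply ciSup_le
    intro x
    unfold indFn
    split <;> simp
  · rw [lpNorm, if_neg hptop]
    have hpt := toReal_pos_of hp hptop
    refine le_of_eq ?_
    have hsum : (∑ x : Fin d → F, ‖indFn (Hfin F d k) x‖ ^ p.toReal)
        = ((Hfin F d k).card : ℝ) := by
      have h1 : ∀ x : Fin d → F,
          ‖indFn (Hfin F d k) x‖ ^ p.toReal
            = if x ∈ Hfin F d k then (1:ℝ) else 0 := by
        intro x; unfold indFn; split <;> simp [Real.zero_rpow hpt.ne']
      rw [Finset.sum_congr rfl fun x _ => h1 x]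
      rw [Finset.sum_ite_mem, Finset.univ_inter, Finset.sum_const, nsmul_eq_mul, mul_one]
    have e2 : ((Fintype.card F:ℝ) ^ d)⁻¹ = (Fintype.card F:ℝ) ^ (-(d:ℝ)) := by
      rw [← Real.rpow_natCast (Fintype.card F : ℝ) d, ← Real.rpow_neg hq.le]
    rw [hsum, e2, show (1/p).toReal = 1/p.toReal by
      rw [ENNReal.toReal_div, ENNReal.toReal_one]]

lemma convMeas_ind_zero (hH0 : 0 < (Hfin F d k).card)
    (hneg : ∀ x ∈ Hfin F d k, -x ∈ Hfin F d k) :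
    convMeas (Hfin F d k) (indFn (Hfin F d k)) 0 = 1 := by
  unfold convMeas indFn
  have h1 : ∀ x ∈ Hfin F d k, ((if (0:Fin d → F) - x ∈ Hfin F d k then (1:ℂ) else 0)) = 1 := by
    intro x hx
    rw [if_pos]
    rw [zero_sub]
    exact hneg x hx
  rw [Finset.sum_congr rfl h1, Finset.sum_const, nsmul_eq_mul, mul_one, inv_mul_cancel₀]
  exact_mod_cast hH0.ne'

lemma lpNorm_conv_ind (hr : 1 ≤ r) (hH0 : 0 < (Hfin F d k).card)
    (hneg : ∀ x ∈ Hfin F d k, -x ∈ Hfin F d k) :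
    (Fintype.card F : ℝ) ^ (-(d:ℝ) * (1/r).toReal)
      ≤ lpNorm r (convMeas (Hfin F d k) (indFn (Hfin F d k))) := by
  have hq := (qR_pos (F := F))
  have hzero := convMeas_ind_zero (F := F) (d := d) (k := k) hH0 hneg
  by_cases hrtop : r = ⊤
  · subst hrtop
    rw [lpNorm, if_pos rfl, show ((1:ℝ≥0∞)/⊤).toReal = 0 by simp, mul_zero,
      Real.rpow_zero]
    haveI : Nonempty (Fin d → F) := ⟨0⟩
    have hb := le_ciSup (f := fun y => ‖convMeas (Hfin F d k) (indFn (Hfin F d k)) y‖)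
      (Set.Finite.bddAbove (Set.finite_range _)) 0
    rw [hzero] at hb
    simpa using hb
  · rw [lpNorm, if_neg hrtop]
    have hrt := toReal_pos_of hr hrtop
    have hone : (1:ℝ) ≤ ∑ y : Fin d → F,
        ‖convMeas (Hfin F d k) (indFn (Hfin F d k)) y‖ ^ r.toReal := by
      have h0 : ‖convMeas (Hfin F d k) (indFn (Hfin F d k)) 0‖ ^ r.toReal = 1 := by
        rw [hzero]; simp
      rw [← h0]
      exact Finset.single_le_sum (f := fun y =>
        ‖convMeas (Hfin F d k) (indFn (Hfin F d k)) y‖ ^ r.toReal)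
        (fun y _ => by positivity) (Finset.mem_univ 0)
    have e2 : ((Fintype.card F:ℝ) ^ d)⁻¹ = (Fintype.card F:ℝ) ^ (-(d:ℝ)) := by
      rw [← Real.rpow_natCast (Fintype.card F : ℝ) d, ← Real.rpow_neg hq.le]
    calc (Fintype.card F : ℝ) ^ (-(d:ℝ) * (1/r).toReal)
        = ((Fintype.card F:ℝ) ^ (-(d:ℝ)) * 1) ^ (1/r.toReal) := by
          rw [mul_one, ← Real.rpow_mul hq.le, show (1/r).toReal = 1/r.toReal by
            rw [ENNReal.toReal_div, ENNReal.toReal_one]]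
      _ ≤ (((Fintype.card F : ℝ) ^ d)⁻¹
            * ∑ y : Fin d → F,
              ‖convMeas (Hfin F d k) (indFn (Hfin F d k)) y‖ ^ r.toReal)
          ^ (1/r.toReal) := by
          rw [e2]
          refine Real.rpow_le_rpow (by positivity) ?_ (by positivity)
          exact mul_le_mul_of_nonneg_left hone (by positivity)
end analytic



lemma exp_le_zero_of_prime_bound (c : ℕ) (B s : ℝ)
    (hB : ∀ q : ℕ, q.Prime → c < q → (q:ℝ) ^ s ≤ B) : s ≤ 0 := by
  by_contra hs
  push_neg at hs
  obtain ⟨q0, hq0le, hq0p⟩ := Nat.exists_infinite_primes (c+1)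
  have hq0 : (1:ℝ) < (q0:ℝ) := by exact_mod_cast hq0p.one_lt
  have hBpos : 0 < B :=
    lt_of_lt_of_le (Real.rpow_pos_of_pos (by linarith) s) (hB q0 hq0p (by omega))
  obtain ⟨q1, hq1le, hq1p⟩ :=
    Nat.exists_infinite_primes (max (c+1) (Nat.ceil (B ^ (1/s)) + 1))
  have hc : c < q1 := by
    have := le_trans (le_max_left (c+1) (Nat.ceil (B ^ (1/s)) + 1)) hq1le; omega
  have hgt : B ^ (1/s) < (q1:ℝ) := by
    have h1 : Nat.ceil (B^(1/s)) + 1 ≤ q1 :=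
      le_trans (le_max_right (c+1) _) hq1le
    calc B^(1/s) ≤ (Nat.ceil (B^(1/s)) : ℝ) := Nat.le_ceil _
      _ < (q1:ℝ) := by exact_mod_cast Nat.lt_of_lt_of_le (Nat.lt_succ_self _) h1
  have hlt : B < (q1:ℝ)^s := by
    have : B = (B^(1/s))^s := by
      rw [← Real.rpow_mul hBpos.le, one_div, inv_mul_cancel₀ hs.ne', Real.rpow_one]
    rw [this]
    exact Real.rpow_lt_rpow (Real.rpow_nonneg hBpos.le _) hgt hs
  exact absurd (hB q1 hq1p hc) (not_le.mpr hlt)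

lemma hull_mem (dR kR a b : ℝ) (hk : 0 < kR) (hkd : kR < dR)
    (ha0 : 0 ≤ a) (ha1 : a ≤ 1) (hb0 : 0 ≤ b) (hb1 : b ≤ 1)
    (hC1 : (dR - kR) * a ≤ dR * b) (hC2 : dR * a - (dR - kR) * b ≤ kR) :
    ((a, b) : ℝ × ℝ) ∈ convexHull ℝ {((0 : ℝ), (0 : ℝ)), (0, 1), (1, 1),
      (dR / (2 * dR - kR), (dR - kR) / (2 * dR - kR))} := by
  set S : Set (ℝ × ℝ) := {((0 : ℝ), (0 : ℝ)), (0, 1), (1, 1),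
      (dR / (2 * dR - kR), (dR - kR) / (2 * dR - kR))} with hS
  have hD : (0:ℝ) < 2 * dR - kR := by linarith
  have hk0 : kR ≠ 0 := hk.ne'
  rcases le_total a b with hab | hab
  · set z : Fin 3 → ℝ × ℝ := ![(0,0),(0,1),(1,1)] with hz
    set w : Fin 3 → ℝ := ![1-b, b-a, a] with hw
    have hw0 : ∀ i ∈ (Finset.univ : Finset (Fin 3)), 0 ≤ w i := by
      intro i _
      fin_cases i
      · show (0:ℝ) ≤ 1 - b; linarith
      · show (0:ℝ) ≤ b - a; linarith
      · exact ha0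
    have hw1 : ∑ i : Fin 3, w i = 1 := by
      rw [Fin.sum_univ_three]
      show 1 - b + (b - a) + a = 1
      ring
    have hzS : ∀ i ∈ (Finset.univ : Finset (Fin 3)), z i ∈ convexHull ℝ S := by
      intro i _
      refine subset_convexHull ℝ S ?_
      fin_cases i <;> simp [hz, hS]
    have h := (convex_convexHull ℝ S).sum_mem hw0 hw1 hzS
    have he : ∑ i : Fin 3, w i • z i = ((a, b) : ℝ × ℝ) := by
      rw [Fin.sum_univ_three]
      show (1-b) • ((0:ℝ),(0:ℝ)) + (b-a) • ((0:ℝ),(1:ℝ)) + a • ((1:ℝ),(1:ℝ)) = (a, b)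
      simp [Prod.ext_iff, Prod.smul_mk, smul_eq_mul]
    rwa [he] at h
  · set z : Fin 3 → ℝ × ℝ := ![(0,0),(1,1),
      (dR / (2 * dR - kR), (dR - kR) / (2 * dR - kR))] with hz
    set w : Fin 3 → ℝ := ![(kR - dR*a + (dR-kR)*b)/kR, (dR*b-(dR-kR)*a)/kR,
      ((2*dR-kR)*(a-b))/kR] with hw
    have hw0 : ∀ i ∈ (Finset.univ : Finset (Fin 3)), 0 ≤ w i := by
      intro i _
      fin_cases i
      · show (0:ℝ) ≤ (kR - dR*a + (dR-kR)*b)/kR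
        exact div_nonneg (by linarith) hk.le
      · show (0:ℝ) ≤ (dR*b-(dR-kR)*a)/kR
        exact div_nonneg (by linarith) hk.le
      · show (0:ℝ) ≤ ((2*dR-kR)*(a-b))/kR
        exact div_nonneg (mul_nonneg (by linarith) (by linarith)) hk.le
    have hw1 : ∑ i : Fin 3, w i = 1 := by
      rw [Fin.sum_univ_three]
      show (kR - dR*a + (dR-kR)*b)/kR + (dR*b-(dR-kR)*a)/kR + ((2*dR-kR)*(a-b))/kR = 1
      field_simp
      ring
    have hzS : ∀ i ∈ (Finset.univ : Finset (Fin 3)), z i ∈ convexHull ℝ S := by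
      intro i _
      refine subset_convexHull ℝ S ?_
      fin_cases i <;> simp [hz, hS]
    have h := (convex_convexHull ℝ S).sum_mem hw0 hw1 hzS
    have he : ∑ i : Fin 3, w i • z i = ((a, b) : ℝ × ℝ) := by
      rw [Fin.sum_univ_three]
      show ((kR - dR*a + (dR-kR)*b)/kR) • ((0:ℝ),(0:ℝ))
          + ((dR*b-(dR-kR)*a)/kR) • ((1:ℝ),(1:ℝ))
          + (((2*dR-kR)*(a-b))/kR) • (dR / (2 * dR - kR), (dR - kR) / (2 * dR - kR))
          = (a, b)
      simp only [Prod.smul_mk, smul_eq_mul, Prod.mk_add_mk, Prod.ext_iff]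
      constructor
      · field_simp [(show (0:ℝ) < dR * 2 - kR by linarith).ne']
        ring
      · field_simp [(show (0:ℝ) < dR * 2 - kR by linarith).ne']
        ring
    rwa [he] at h



lemma real_step1 (x N C D a b dR kR : ℝ) (hx : 1 ≤ x) (hN1 : 1 ≤ N)
    (hND : N ≤ D * x ^ kR) (hD1 : 1 ≤ D) (hb0 : 0 ≤ b) (hb1 : b ≤ 1) (hC : 0 < C)
    (h1 : N ^ (b-1) * x ^ (-dR*b) ≤ C * x ^ (-dR*a)) :
    x ^ (dR*a - dR*b - kR*(1-b)) ≤ C * D := by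
  have hx0 : (0:ℝ) < x := by linarith
  have hN0 : (0:ℝ) < N := by linarith
  have hu : x ^ (dR*a) * (N ^ (b-1) * x ^ (-dR*b)) ≤ x ^ (dR*a) * (C * x ^ (-dR*a)) :=
    mul_le_mul_of_nonneg_left h1 (le_of_lt (Real.rpow_pos_of_pos hx0 _))
  have hcol : x ^ (dR*a) * (C * x ^ (-dR*a)) = C := by
    rw [mul_comm C, ← mul_assoc, ← Real.rpow_add hx0]
    simp
  have hcol2 : x ^ (dR*a) * (N ^ (b-1) * x ^ (-dR*b))
      = N ^ (b-1) * x ^ (dR*a - dR*b) := by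
    rw [show dR*a - dR*b = dR*a + -dR*b by ring, Real.rpow_add hx0]
    ring
  rw [hcol, hcol2] at hu
  -- hu : N ^ (b-1) * x ^ (dR*a - dR*b) ≤ C
  have hNb : x ^ (dR*a - dR*b) ≤ C * N ^ (1-b) := by
    have hpos : (0:ℝ) < N ^ (1-b) := Real.rpow_pos_of_pos hN0 _
    have := mul_le_mul_of_nonneg_left hu hpos.le
    rw [← mul_assoc, ← Real.rpow_add hN0] at this
    simp only [show (1-b) + (b-1) = 0 by ring, Real.rpow_zero, one_mul] at this
    linarith [this]
  have hNb2 : N ^ (1-b) ≤ D * x ^ (kR*(1-b)) := by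
    calc N ^ (1-b) ≤ (D * x ^ kR) ^ (1-b) :=
          Real.rpow_le_rpow hN0.le hND (by linarith)
      _ = D ^ (1-b) * (x ^ kR) ^ (1-b) :=
          Real.mul_rpow (by linarith) (Real.rpow_pos_of_pos hx0 _).le
      _ = D ^ (1-b) * x ^ (kR*(1-b)) := by rw [← Real.rpow_mul hx0.le]
      _ ≤ D * x ^ (kR*(1-b)) := by
          refine mul_le_mul_of_nonneg_right ?_ (Real.rpow_pos_of_pos hx0 _).le
          calc D ^ (1-b) ≤ D ^ (1:ℝ) :=
                Real.rpow_le_rpow_of_exponent_le hD1 (by linarith)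
            _ = D := Real.rpow_one D
  have hfin : x ^ (dR*a - dR*b) ≤ C * D * x ^ (kR*(1-b)) := by
    calc x ^ (dR*a - dR*b) ≤ C * N ^ (1-b) := hNb
      _ ≤ C * (D * x ^ (kR*(1-b))) := mul_le_mul_of_nonneg_left hNb2 hC.le
      _ = C * D * x ^ (kR*(1-b)) := by ring
  have := mul_le_mul_of_nonneg_right hfin (Real.rpow_pos_of_pos hx0 (-(kR*(1-b)))).le
  rw [← Real.rpow_add hx0, mul_assoc, ← Real.rpow_add hx0] at this
  simpa [show dR*a - dR*b + -(kR*(1-b)) = dR*a - dR*b - kR*(1-b) by ring,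
    show kR*(1-b) + -(kR*(1-b)) = 0 by ring] using this

lemma real_step2 (x N C D a b dR kR : ℝ) (hx : 1 ≤ x) (hN1 : 1 ≤ N)
    (hND : N ≤ D * x ^ kR) (hD1 : 1 ≤ D) (ha0 : 0 ≤ a) (ha1 : a ≤ 1) (hC : 0 < C)
    (h2 : x ^ (-dR*b) ≤ C * (x ^ (-dR) * N) ^ a) :
    x ^ ((dR - kR)*a - dR*b) ≤ C * D := by
  have hx0 : (0:ℝ) < x := by linarith
  have hN0 : (0:ℝ) < N := by linarith
  have hb1 : (x ^ (-dR) * N) ^ a ≤ D * x ^ ((kR-dR)*a) := by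
    calc (x ^ (-dR) * N) ^ a ≤ (x ^ (-dR) * (D * x ^ kR)) ^ a := by
          refine Real.rpow_le_rpow ?_ ?_ ha0
          · positivity
          · exact mul_le_mul_of_nonneg_left hND (Real.rpow_pos_of_pos hx0 _).le
      _ = (D * x ^ (kR - dR)) ^ a := by
          rw [show kR - dR = -dR + kR by ring, Real.rpow_add hx0]
          ring_nf
      _ = D ^ a * (x ^ (kR-dR)) ^ a :=
          Real.mul_rpow (by linarith) (Real.rpow_pos_of_pos hx0 _).le
      _ = D ^ a * x ^ ((kR-dR)*a) := by rw [← Real.rpow_mul hx0.le]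
      _ ≤ D * x ^ ((kR-dR)*a) := by
          refine mul_le_mul_of_nonneg_right ?_ (Real.rpow_pos_of_pos hx0 _).le
          calc D ^ a ≤ D ^ (1:ℝ) := Real.rpow_le_rpow_of_exponent_le hD1 ha1
            _ = D := Real.rpow_one D
  have hfin : x ^ (-dR*b) ≤ C * D * x ^ ((kR-dR)*a) := by
    calc x ^ (-dR*b) ≤ C * (x ^ (-dR) * N) ^ a := h2
      _ ≤ C * (D * x ^ ((kR-dR)*a)) := mul_le_mul_of_nonneg_left hb1 hC.le
      _ = C * D * x ^ ((kR-dR)*a) := by ring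
  have := mul_le_mul_of_nonneg_right hfin (Real.rpow_pos_of_pos hx0 ((dR-kR)*a)).le
  rw [← Real.rpow_add hx0, mul_assoc, ← Real.rpow_add hx0] at this
  rw [show (dR-kR)*a - dR*b = -dR*b + (dR-kR)*a by ring]
  simpa [show (kR-dR)*a + (dR-kR)*a = 0 by ring] using this

end
end aux

set_option maxRecDepth 4000 in
open scoped ENNReal in
/-- For `2 ≤ k ≤ d−1` and `1 ≤ p, r ≤ ∞`, if some constant `C`
makes the averaging inequality over `H_k` hold for all finite fields of sufficiently
large characteristic, then `(1/p, 1/r)` lies in the convex hull of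
`(0,0), (0,1), (1,1)` and `(d/(2d−k), (d−k)/(2d−k))`. -/
theorem averaging_Hk_necessary (d k : ℕ) (hd : 3 ≤ d) (hk2 : 2 ≤ k) (hkd : k ≤ d - 1)
    (p r : ℝ≥0∞) (hp : 1 ≤ p) (hr : 1 ≤ r)
    (h : ∃ C : ℝ, 0 < C ∧ ∃ c : ℕ,
      ∀ (F : Type) [Field F] [Fintype F], c < ringChar F →
        ∀ f : (Fin d → F) → ℂ,
          lpNorm r (convMeas (Hfin F d k) f) ≤ C * lpNorm p f) :
    ((1 / p).toReal, (1 / r).toReal) ∈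
      convexHull ℝ {((0 : ℝ), (0 : ℝ)), (0, 1), (1, 1),
        ((d : ℝ) / (2 * d - k), ((d : ℝ) - k) / (2 * d - k))} := by
  classical
  obtain ⟨C, hC, c, hmain⟩ := h
  have hkdlt : k < d := by omega
  set A := (1/p).toReal with hA
  set B := (1/r).toReal with hB
  have ha0 : 0 ≤ A := ENNReal.toReal_nonneg
  have hb0 : 0 ≤ B := ENNReal.toReal_nonneg
  have ha1 : A ≤ 1 := by
    have h1 : (1/p) ≤ 1 := by
      rw [one_div]
      exact ENNReal.inv_le_one.mpr hp
    calc A ≤ (1:ℝ≥0∞).toReal := ENNReal.toReal_mono ENNReal.one_ne_top h1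
      _ = 1 := ENNReal.toReal_one
  have hb1 : B ≤ 1 := by
    have h1 : (1/r) ≤ 1 := by
      rw [one_div]
      exact ENNReal.inv_le_one.mpr hr
    calc B ≤ (1:ℝ≥0∞).toReal := ENNReal.toReal_mono ENNReal.one_ne_top h1
      _ = 1 := ENNReal.toReal_one
  have hD1 : (1:ℝ) ≤ (d:ℝ)^d := by
    calc (1:ℝ) = 1^d := (one_pow d).symm
      _ ≤ (d:ℝ)^d := by
          refine pow_le_pow_left₀ zero_le_one ?_ d
          exact_mod_cast Nat.one_le_of_lt hd
  -- the two key exponent inequalities, for every large prime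
  have key : ∀ q : ℕ, q.Prime → c < q →
      ((q:ℝ)) ^ ((d:ℝ)*A - (d:ℝ)*B - (k:ℝ)*(1-B)) ≤ C * (d:ℝ)^d ∧
      ((q:ℝ)) ^ (((d:ℝ) - (k:ℝ))*A - (d:ℝ)*B) ≤ C * (d:ℝ)^d := by
    intro q hq hcq
    haveI := Fact.mk hq
    haveI : NeZero q := ⟨hq.ne_zero⟩
    have hchar : c < ringChar (ZMod q) := by rw [ZMod.ringChar_zmod_n]; exact hcq
    have hcard : (Fintype.card (ZMod q)) = q := ZMod.card q
    have hx : (1:ℝ) ≤ (q:ℝ) := by exact_mod_cast hq.one_lt.le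
    have h0 : (0 : Fin d → ZMod q) ∈ Hfin (ZMod q) d k := zero_mem_Hfin
    have hneg : ∀ x ∈ Hfin (ZMod q) d k, -x ∈ Hfin (ZMod q) d k :=
      fun x hx => neg_mem_Hfin hx
    have hH0 : 0 < (Hfin (ZMod q) d k).card := Finset.card_pos.mpr ⟨0, h0⟩
    have hN1 : (1:ℝ) ≤ ((Hfin (ZMod q) d k).card : ℝ) := by exact_mod_cast hH0
    have hND : ((Hfin (ZMod q) d k).card : ℝ) ≤ (d:ℝ)^d * (q:ℝ) ^ (k:ℝ) := by
      have h1 := Hfin_card_le (F := ZMod q) hd hk2 hkd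
      rw [hcard] at h1
      calc ((Hfin (ZMod q) d k).card : ℝ) ≤ ((d^d * q^k : ℕ) : ℝ) := by exact_mod_cast h1
        _ = (d:ℝ)^d * (q:ℝ) ^ (k:ℝ) := by
            push_cast
            rw [Real.rpow_natCast]
    constructor
    · -- test function: delta
      have t1 := hmain (ZMod q) hchar (deltaFn (ZMod q) d)
      have low := lpNorm_conv_delta (r := r) hr h0
      have upp := lpNorm_delta (p := p) (F := ZMod q) (d := d) hp
      rw [upp, hcard] at t1
      rw [hcard] at low
      exact real_step1 (q:ℝ) _ C ((d:ℝ)^d) A B (d:ℝ) (k:ℝ) hx hN1 hND hD1 hb0 hb1 hC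
        (le_trans low t1)
    · -- test function: indicator of the variety
      have t2 := hmain (ZMod q) hchar (indFn (Hfin (ZMod q) d k))
      have low2 := lpNorm_conv_ind (r := r) hr hH0 hneg
      have upp2 := lpNorm_ind_le (p := p) (F := ZMod q) (d := d) (k := k) hp
      rw [hcard] at low2 upp2
      have chain : (q:ℝ) ^ (-(d:ℝ)*B) ≤ C * ((q:ℝ) ^ (-(d:ℝ)) * ((Hfin (ZMod q) d k).card : ℝ)) ^ A :=
        le_trans low2 (le_trans t2 (mul_le_mul_of_nonneg_left upp2 hC.le))
      exact real_step2 (q:ℝ) _ C ((d:ℝ)^d) A B (d:ℝ) (k:ℝ) hx hN1 hND hD1 ha0 ha1 hC chain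
  have s1 : (d:ℝ)*A - (d:ℝ)*B - (k:ℝ)*(1-B) ≤ 0 :=
    exp_le_zero_of_prime_bound c (C * (d:ℝ)^d) _ (fun q hq hcq => (key q hq hcq).1)
  have s2 : ((d:ℝ) - (k:ℝ))*A - (d:ℝ)*B ≤ 0 :=
    exp_le_zero_of_prime_bound c (C * (d:ℝ)^d) _ (fun q hq hcq => (key q hq hcq).2)
  have hk0 : (0:ℝ) < (k:ℝ) := by exact_mod_cast Nat.lt_of_lt_of_le Nat.zero_lt_two hk2
  have hkdR : (k:ℝ) < (d:ℝ) := by exact_mod_cast hkdlt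
  exact hull_mem (d:ℝ) (k:ℝ) A B hk0 hkdR ha0 ha1 hb0 hb1 (by linarith) (by linarith)
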